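/- If A is a nonnegative m×n doubly balanced matrix (all row sums equal and all column sums equal), then cap(A) = s(A), where s(A) is the sum of all entries. -/

import Mathlib

open Matrix BigOperators

/-- Capacity of a nonnegative matrix. -/
noncomputable def matCap {ι κ : Type*} [Fintype ι] [Fintype κ] (A : Matrix ι κ ℝ) : ℝ :=
  sInf {c : ℝ | ∃ x : κ → ℝ, (∀ j, 0 < x j) ∧
    c = (Fintype.card ι : ℝ) * (∏ i, A.mulVec x i) ^ ((1 : ℝ) / (Fintype.card ι : ℝ)) /
        (∏ j, x j) ^ ((1 : ℝ) / (Fintype.card κ : ℝ))}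

/-- Size of a matrix: the sum of all entries. -/
noncomputable def matSize {ι κ : Type*} [Fintype ι] [Fintype κ] (A : Matrix ι κ ℝ) : ℝ :=
  ∑ i, ∑ j, A i j

/-- The measure Δ of distance to doubly balanced. -/
noncomputable def matDelta {ι κ : Type*} [Fintype ι] [Fintype κ] (A : Matrix ι κ ℝ) : ℝ :=
  (1 / (Fintype.card ι : ℝ)) * ∑ i, (matSize A - (Fintype.card ι : ℝ) * ∑ j, A i j) ^ 2 +
  (1 / (Fintype.card κ : ℝ)) * ∑ j, (matSize A - (Fintype.card κ : ℝ) * ∑ i, A i j) ^ 2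

/-- For a doubly balanced nonnegative matrix, the capacity equals the size. -/
theorem matCap_eq_matSize_of_doublyBalanced {m n : ℕ} (hm : 0 < m) (hn : 0 < n)
    (A : Matrix (Fin m) (Fin n) ℝ) (hA : ∀ i j, 0 ≤ A i j)
    (hrow : ∀ i i' : Fin m, ∑ j, A i j = ∑ j, A i' j)
    (hcol : ∀ j j' : Fin n, ∑ i, A i j = ∑ i, A i j') :
    matCap A = matSize A := by
  have hm' : (0:ℝ) < m := by exact_mod_cast hm
  have hn' : (0:ℝ) < n := by exact_mod_cast hn
  have i0 : Fin m := ⟨0, hm⟩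
  have j0 : Fin n := ⟨0, hn⟩
  set r : ℝ := ∑ j, A i0 j with hr
  have hrow' : ∀ i, ∑ j, A i j = r := fun i => hrow i i0
  have hr0 : 0 ≤ r := Finset.sum_nonneg fun j _ => hA i0 j
  set c : ℝ := ∑ i, A i j0 with hc
  have hcol' : ∀ j, ∑ i, A i j = c := fun j => hcol j j0
  have hsize : matSize A = m * r := by
    simp [matSize, hrow', Finset.sum_const, mul_comm]
  have hsize' : matSize A = n * c := by
    rw [matSize]; refine Finset.sum_comm.trans ?_
    simp [hcol', Finset.sum_const, mul_comm]
  have hcr : (n:ℝ) * c = m * r := by rw [← hsize', hsize]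
  -- simplify cards
  have hcardm : (Fintype.card (Fin m) : ℝ) = m := by simp
  have hcardn : (Fintype.card (Fin n) : ℝ) = n := by simp
  apply IsLeast.csInf_eq
  constructor
  · -- membership: take x = 1
    refine ⟨fun _ => 1, fun j => one_pos, ?_⟩
    have hmv : ∀ i, A.mulVec (fun _ => 1) i = r := by
      intro i
      simp [Matrix.mulVec, dotProduct, hrow' i]
    have : (∏ i, A.mulVec (fun _ => 1) i) = r ^ m := by
      simp [hmv, Finset.prod_const]
    rw [this, hcardm, hcardn]
    have : (r ^ m) ^ ((1:ℝ)/m) = r := by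
      rw [← Real.rpow_natCast r m, ← Real.rpow_mul hr0]
      rw [mul_one_div, div_self hm'.ne', Real.rpow_one]
    rw [this]
    simp [hsize]
  · -- lower bound
    rintro y ⟨x, hx, rfl⟩
    rw [hcardm, hcardn]
    have hxp : (0:ℝ) < ∏ j, x j := Finset.prod_pos fun j _ => hx j
    have hmvnn : ∀ i, 0 ≤ A.mulVec x i := by
      intro i
      rw [Matrix.mulVec, dotProduct]
      exact Finset.sum_nonneg fun j _ => mul_nonneg (hA i j) (hx j).le
    rcases eq_or_lt_of_le hr0 with hrz | hrpos
    · -- r = 0: size is 0, RHS nonneg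
      rw [hsize, ← hrz, mul_zero]
      have hP : 0 ≤ ∏ i, A.mulVec x i := Finset.prod_nonneg fun i _ => hmvnn i
      exact div_nonneg (mul_nonneg hm'.le (Real.rpow_nonneg hP _))
        (Real.rpow_nonneg hxp.le _)
    · -- key: mulVec x i ≥ r * ∏ j, x j ^ (A i j / r)
      have key : ∀ i, r * ∏ j, x j ^ (A i j / r) ≤ A.mulVec x i := by
        intro i
        have := Real.geom_mean_le_arith_mean_weighted Finset.univ
          (fun j => A i j / r) x
          (fun j _ => div_nonneg (hA i j) hr0)
          (by rw [← Finset.sum_div, hrow' i, div_self hrpos.ne'])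
          (fun j _ => (hx j).le)
        calc r * ∏ j, x j ^ (A i j / r) ≤ r * ∑ j, (A i j / r) * x j := by
              exact mul_le_mul_of_nonneg_left this hr0
          _ = A.mulVec x i := by
              rw [Finset.mul_sum, Matrix.mulVec, dotProduct]
              congr 1; ext j; field_simp
      have keyprod : r ^ m * (∏ j, x j) ^ ((m:ℝ)/n) ≤ ∏ i, A.mulVec x i := by
        have h1 : ∏ i, (r * ∏ j, x j ^ (A i j / r)) ≤ ∏ i, A.mulVec x i :=
          Finset.prod_le_prod (fun i _ => mul_nonneg hr0
            (Finset.prod_nonneg fun j _ => Real.rpow_nonneg (hx j).le _)) (fun i _ => key i)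
        refine le_trans (le_of_eq ?_) h1
        rw [Finset.prod_mul_distrib, Finset.prod_const, Finset.card_univ, Fintype.card_fin]
        congr 1
        rw [Finset.prod_comm]
        have hcr' : c / r = (m:ℝ)/n := by
          field_simp
          linarith [hcr]
        have step : ∀ j, ∏ i, x j ^ (A i j / r) = x j ^ ((m:ℝ)/n) := by
          intro j
          rw [← Real.rpow_sum_of_pos (hx j) _ Finset.univ, ← Finset.sum_div,
            hcol' j, hcr']
        rw [Finset.prod_congr rfl (fun j _ => step j),
          Real.finset_prod_rpow _ _ (fun j _ => (hx j).le)]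
      -- take rpow 1/m
      have h2 : r * (∏ j, x j) ^ ((1:ℝ)/n) ≤ (∏ i, A.mulVec x i) ^ ((1:ℝ)/m) := by
        have hmono := Real.rpow_le_rpow (by positivity) keyprod
          (le_of_lt (by positivity : (0:ℝ) < 1/m))
        calc r * (∏ j, x j) ^ ((1:ℝ)/n)
            = (r ^ m * (∏ j, x j) ^ ((m:ℝ)/n)) ^ ((1:ℝ)/m) := by
              rw [Real.mul_rpow (by positivity) (by positivity),
                ← Real.rpow_natCast r m, ← Real.rpow_mul hr0,
                ← Real.rpow_mul hxp.le, mul_one_div, div_self hm'.ne']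
              rw [Real.rpow_one]
              congr 1
              rw [div_mul_div_comm, mul_one, mul_comm (n:ℝ) (m:ℝ), ← div_div, div_self hm'.ne']
          _ ≤ (∏ i, A.mulVec x i) ^ ((1:ℝ)/m) := hmono
      rw [hsize, le_div_iff₀ (Real.rpow_pos_of_pos hxp _)]
      calc (m:ℝ) * r * (∏ j, x j) ^ ((1:ℝ)/n)
          = m * (r * (∏ j, x j) ^ ((1:ℝ)/n)) := by ring
        _ ≤ m * (∏ i, A.mulVec x i) ^ ((1:ℝ)/m) := by
            exact mul_le_mul_of_nonneg_left h2 hm'.le
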